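/- Borwein–Preiss smooth variational principle: Let X be a Banach space and f : X → ℝ ∪ {+∞} a proper lower semicontinuous function bounded below. Given ε > 0, λ > 0, p ≥ 1, and x₀ with f(x₀) < inf f + ε, there exist a point v ∈ X with ‖v − x₀‖ ≤ λ and a sequence (x_i) in X converging to v with weights μ_i ≥ 0, ∑ μ_i = 1, such that f(v) + (ε/λ^p) ∑_i μ_i ‖v − x_i‖^p ≤ f(x₀), and the function x ↦ f(x) + (ε/λ^p) ∑_i μ_i ‖x − x_i‖^p attains a strong minimum at v. -/

import Mathlib

open Filter

open Classical in
noncomputable def bpAux {X : Type*} [NormedAddCommGroup X]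
    (f : X → EReal) (x₀ : X) (p : ℝ) (c : ℕ → ℝ) (eps : ℕ → ℝ) : ℕ → X × (X → EReal)
  | 0 => (x₀, f)
  | k + 1 =>
    let prev := bpAux f x₀ p c eps k
    let g : X → EReal := fun z => prev.2 z + ((c k * ‖z - prev.1‖ ^ p : ℝ) : EReal)
    ⟨if h : ∃ y, g y < (⨅ z, g z) + ((eps k : ℝ) : EReal) ∧ g y ≤ g prev.1 then h.choose
      else prev.1, g⟩

theorem bpAux_spec {X : Type*} [NormedAddCommGroup X] (f : X → EReal) (x₀ : X) (p : ℝ)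
    (c : ℕ → ℝ) (eps : ℕ → ℝ) (k : ℕ)
    (hex : ∃ y, (bpAux f x₀ p c eps (k+1)).2 y
            < (⨅ z, (bpAux f x₀ p c eps (k+1)).2 z) + ((eps k : ℝ) : EReal)
            ∧ (bpAux f x₀ p c eps (k+1)).2 y ≤ (bpAux f x₀ p c eps (k+1)).2 (bpAux f x₀ p c eps k).1) :
    (bpAux f x₀ p c eps (k+1)).2 ((bpAux f x₀ p c eps (k+1)).1)
      < (⨅ z, (bpAux f x₀ p c eps (k+1)).2 z) + ((eps k : ℝ) : EReal)
    ∧ (bpAux f x₀ p c eps (k+1)).2 ((bpAux f x₀ p c eps (k+1)).1)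
        ≤ (bpAux f x₀ p c eps (k+1)).2 (bpAux f x₀ p c eps k).1 := by
  have h1 : (bpAux f x₀ p c eps (k+1)).1 = @dite X
      (∃ y, (bpAux f x₀ p c eps (k+1)).2 y
            < (⨅ z, (bpAux f x₀ p c eps (k+1)).2 z) + ((eps k : ℝ) : EReal)
            ∧ (bpAux f x₀ p c eps (k+1)).2 y ≤ (bpAux f x₀ p c eps (k+1)).2 (bpAux f x₀ p c eps k).1)
      (Classical.propDecidable _) (fun h => h.choose)
      (fun _ => (bpAux f x₀ p c eps k).1) := rfl
  rw [h1, dif_pos hex]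
  exact hex.choose_spec

lemma bp_cancel_le {m : EReal} (h1 : m ≠ ⊥) (h2 : m ≠ ⊤) {a b : ℝ}
    (h : m + (a : EReal) ≤ m + (b : EReal)) : a ≤ b := by
  lift m to ℝ using ⟨h2, h1⟩
  rw [← EReal.coe_add, ← EReal.coe_add, EReal.coe_le_coe_iff] at h
  linarith

lemma bp_cancel_lt {m : EReal} (h1 : m ≠ ⊥) (h2 : m ≠ ⊤) {a b : ℝ}
    (h : m + (a : EReal) < m + (b : EReal)) : a < b := by
  lift m to ℝ using ⟨h2, h1⟩
  rw [← EReal.coe_add, ← EReal.coe_add, EReal.coe_lt_coe_iff] at h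
  linarith

lemma bp_le_of_forall_lt {x y : EReal} (h : ∀ b, b < x → b ≤ y) : x ≤ y := by
  by_contra hc
  push_neg at hc
  obtain ⟨b, h1, h2⟩ := exists_between hc
  exact absurd (h b h2) (not_le.mpr h1)

set_option maxHeartbeats 2000000 in
/-- Borwein–Preiss smooth variational principle. -/
theorem borwein_preiss_variational_principle
    {X : Type*} [NormedAddCommGroup X] [NormedSpace ℝ X] [CompleteSpace X]
    (f : X → EReal) (hlsc : LowerSemicontinuous f)
    (hbdd : BddBelow (Set.range f)) (hbot : ∀ x, f x ≠ ⊥)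
    (hproper : ∃ x, f x ≠ ⊤)
    (ε : ℝ) (hε : 0 < ε) (lam : ℝ) (hlam : 0 < lam) (p : ℝ) (hp : 1 ≤ p)
    (x₀ : X) (hx₀ : f x₀ < (⨅ x, f x) + (ε : EReal)) :
    ∃ (v : X) (x : ℕ → X) (μ : ℕ → ℝ),
      ‖v - x₀‖ ≤ lam ∧
      Tendsto x atTop (nhds v) ∧
      (∀ i, 0 ≤ μ i) ∧ (∑' i, μ i) = 1 ∧
      f v + (((ε / lam ^ p) * ∑' i, μ i * ‖v - x i‖ ^ p : ℝ) : EReal) ≤ f x₀ ∧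
      (∀ y : X,
        f v + (((ε / lam ^ p) * ∑' i, μ i * ‖v - x i‖ ^ p : ℝ) : EReal) ≤
        f y + (((ε / lam ^ p) * ∑' i, μ i * ‖y - x i‖ ^ p : ℝ) : EReal)) ∧
      (∀ y : ℕ → X,
        Tendsto (fun n => f (y n) +
            (((ε / lam ^ p) * ∑' i, μ i * ‖y n - x i‖ ^ p : ℝ) : EReal))
          atTop
          (nhds (f v + (((ε / lam ^ p) * ∑' i, μ i * ‖v - x i‖ ^ p : ℝ) : EReal))) →
        Tendsto y atTop (nhds v)) := by
  classical
  have hp0 : (0:ℝ) < p := lt_of_lt_of_le one_pos hp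
  have hlamp : (0:ℝ) < lam ^ p := Real.rpow_pos_of_pos hlam p
  set δ : ℝ := ε / lam ^ p with hδdef
  have hδ : 0 < δ := div_pos hε hlamp
  set M : EReal := ⨅ x, f x with hMdef
  have hM_ne_bot : M ≠ ⊥ := by
    intro h
    rw [h] at hx₀
    simp only [EReal.bot_add] at hx₀
    exact not_lt_bot hx₀
  have hM_ne_top : M ≠ ⊤ := by
    obtain ⟨z, hz⟩ := hproper
    intro h
    exact hz (top_le_iff.mp (h ▸ iInf_le f z))
  have hfx0_ne_top : f x₀ ≠ ⊤ := ne_top_of_lt hx₀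
  have hfx0_ne_bot : f x₀ ≠ ⊥ := hbot x₀
  set Mr : ℝ := M.toReal with hMrdef
  have hMcoe : (Mr : EReal) = M := EReal.coe_toReal hM_ne_top hM_ne_bot
  set t : ℝ := (f x₀).toReal - Mr with htdef
  have hfx0coe : f x₀ = ((Mr + t : ℝ) : EReal) := by
    have h1 : Mr + t = (f x₀).toReal := by rw [htdef]; ring
    rw [h1]
    exact (EReal.coe_toReal hfx0_ne_top hfx0_ne_bot).symm
  have hM_le_fx0 : M ≤ f x₀ := iInf_le f x₀
  have ht0 : 0 ≤ t := by
    have := EReal.toReal_le_toReal hM_le_fx0 hM_ne_bot hfx0_ne_top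
    rw [htdef]
    simp only [← hMrdef] at this ⊢
    linarith
  have htε : t < ε := by
    have h1 : f x₀ < ((Mr + ε : ℝ) : EReal) := by
      rw [EReal.coe_add, hMcoe]; exact hx₀
    rw [hfx0coe, EReal.coe_lt_coe_iff] at h1
    linarith
  set μ0 : ℝ := (t / ε + 1) / 2 with hμ0def
  have hμ0pos : 0 < μ0 := by
    have : 0 ≤ t / ε := div_nonneg ht0 hε.le
    rw [hμ0def]; linarith
  have hμ01 : μ0 < 1 := by
    have : t / ε < 1 := (div_lt_one hε).mpr htε
    rw [hμ0def]; linarith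
  have hμ0t : t < ε * μ0 := by
    have h1 : ε * μ0 = (t + ε) / 2 := by
      rw [hμ0def]; field_simp
    rw [h1]; linarith
  set w : ℕ → ℝ := fun k => if k = 0 then μ0 else (1 - μ0) * (1 / 2) ^ k with hwdef
  have hw0 : w 0 = μ0 := by simp [hwdef]
  have hwS : ∀ k, w (k + 1) = (1 - μ0) * (1 / 2) ^ (k + 1) := by
    intro k; simp [hwdef]
  have hwpos : ∀ k, 0 < w k := by
    intro k
    cases k with
    | zero => rw [hw0]; exact hμ0pos
    | succ k =>
      rw [hwS]
      exact mul_pos (by linarith) (by positivity)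
  have hwle : ∀ k, w k ≤ (1 / 2 : ℝ) ^ k := by
    intro k
    cases k with
    | zero => simpa [hw0] using hμ01.le
    | succ k =>
      rw [hwS]
      have h2 : (0:ℝ) ≤ (1/2:ℝ) ^ (k+1) := by positivity
      nlinarith [hμ0pos]
  have hw_sum : Summable w :=
    Summable.of_nonneg_of_le (fun k => (hwpos k).le) hwle summable_geometric_two
  have hw_tsum : ∑' k, w k = 1 := by
    rw [hw_sum.tsum_eq_zero_add, hw0]
    have h1 : ∀ b : ℕ, w (b + 1) = ((1 - μ0) * (1/2)) * (1/2:ℝ) ^ b := by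
      intro b; rw [hwS]; ring
    rw [tsum_congr h1, tsum_mul_left, tsum_geometric_two]
    ring
  set r0 : ℝ := (t / (δ * μ0)) ^ (1 / p) with hr0def
  have hδμ0 : 0 < δ * μ0 := mul_pos hδ hμ0pos
  have hr00 : 0 ≤ r0 := Real.rpow_nonneg (div_nonneg ht0 hδμ0.le) _
  have hr0p : δ * μ0 * r0 ^ p = t := by
    rw [hr0def, ← Real.rpow_mul (div_nonneg ht0 hδμ0.le), one_div,
      inv_mul_cancel₀ hp0.ne', Real.rpow_one]
    field_simp
  have hr0lam : r0 < lam := by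
    have hbase : t / (δ * μ0) < lam ^ p := by
      rw [div_lt_iff₀ hδμ0]
      have h2 : lam ^ p * (δ * μ0) = ε * μ0 := by
        rw [hδdef]; field_simp
      rw [h2]; exact hμ0t
    calc r0 = (t / (δ * μ0)) ^ (1/p) := hr0def
      _ < (lam ^ p) ^ (1/p) :=
          Real.rpow_lt_rpow (div_nonneg ht0 hδμ0.le) hbase (by positivity)
      _ = lam := by
          rw [← Real.rpow_mul hlam.le, mul_one_div, div_self hp0.ne', Real.rpow_one]
  set ρ : ℝ := (lam - r0) / 2 with hρdef
  have hρpos : 0 < ρ := by rw [hρdef]; linarith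
  set r : ℕ → ℝ := fun k => if k = 0 then r0 else ρ * (1 / 2) ^ k with hrdef
  have hr0' : r 0 = r0 := by simp [hrdef]
  have hrS : ∀ k, r (k + 1) = ρ * (1 / 2 : ℝ) ^ (k + 1) := by intro k; simp [hrdef]
  have hrnn : ∀ k, 0 ≤ r k := by
    intro k
    cases k with
    | zero => rw [hr0']; exact hr00
    | succ k => rw [hrS]; positivity
  have hrSpos : ∀ k, 0 < r (k + 1) := by
    intro k; rw [hrS]; positivity
  set e : ℕ → ℝ := fun k => δ * w k * r k ^ p with hedef
  have he0 : e 0 = t := by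
    have : e 0 = δ * w 0 * r 0 ^ p := rfl
    rw [this, hw0, hr0']
    exact hr0p
  have hepos : ∀ k, 0 < e (k + 1) := by
    intro k
    exact mul_pos (mul_pos hδ (hwpos _)) (Real.rpow_pos_of_pos (hrSpos k) p)
  have henn : ∀ k, 0 ≤ e k := by
    intro k
    exact mul_nonneg (mul_nonneg hδ.le (hwpos k).le) (Real.rpow_nonneg (hrnn k) p)
  set c : ℕ → ℝ := fun k => δ * w k with hcdef
  have hcpos : ∀ k, 0 < c k := fun k => mul_pos hδ (hwpos k)
  set epsq : ℕ → ℝ := fun k => e (k + 1) with hepsqdef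
  set F : ℕ → X × (X → EReal) := bpAux f x₀ p c epsq with hFdef
  set xx : ℕ → X := fun k => (F k).1 with hxxdef
  set fk : ℕ → X → EReal := fun k => (F k).2 with hfkdef
  set m : ℕ → EReal := fun k => ⨅ z, fk k z with hmdef
  have hfk0 : fk 0 = f := rfl
  have hxx0 : xx 0 = x₀ := rfl
  have hstep : ∀ k z, fk (k+1) z = fk k z + ((c k * ‖z - xx k‖ ^ p : ℝ) : EReal) :=
    fun k z => rfl
  have hclosed : ∀ k y, fk k y
      = f y + ((∑ i ∈ Finset.range k, c i * ‖y - xx i‖ ^ p : ℝ) : EReal) := by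
    intro k
    induction k with
    | zero => intro y; simp [hfk0]
    | succ k ih =>
      intro y
      rw [hstep k y, ih y, Finset.sum_range_succ, EReal.coe_add, ← add_assoc]
  have hfk_ne_bot : ∀ k y, fk k y ≠ ⊥ := by
    intro k y
    rw [hclosed k y]
    simp [EReal.add_eq_bot_iff, hbot y]
  have hf_le_fk : ∀ k y, f y ≤ fk k y := by
    intro k y
    rw [hclosed k y]
    refine le_add_of_nonneg_right ?_
    refine EReal.coe_nonneg.mpr (Finset.sum_nonneg fun i _ => ?_)
    exact mul_nonneg (hcpos i).le (Real.rpow_nonneg (norm_nonneg _) p)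
  have hm_le : ∀ k y, m k ≤ fk k y := fun k y => iInf_le _ y
  have hM_le_m : ∀ k, M ≤ m k := by
    intro k
    exact le_iInf fun y => (iInf_le f y).trans (hf_le_fk k y)
  have hm_ne_bot : ∀ k, m k ≠ ⊥ := by
    intro k h
    exact hM_ne_bot (le_bot_iff.mp (h ▸ hM_le_m k))
  have hfk_x0_ne_top : ∀ k, fk k x₀ ≠ ⊤ := by
    intro k
    rw [hclosed k x₀]
    exact (EReal.add_lt_top hfx0_ne_top (EReal.coe_ne_top _)).ne
  have hm_ne_top : ∀ k, m k ≠ ⊤ := by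
    intro k h
    exact hfk_x0_ne_top k (top_le_iff.mp (h ▸ hm_le k x₀))
  have hchoice : ∀ k, fk (k+1) (xx (k+1)) < m (k+1) + ((epsq k : ℝ) : EReal)
      ∧ fk (k+1) (xx (k+1)) ≤ fk (k+1) (xx k) := by
    intro k
    have hmlt : m (k+1) < m (k+1) + ((epsq k : ℝ) : EReal) := by
      conv_lhs => rw [← EReal.coe_toReal (hm_ne_top (k+1)) (hm_ne_bot (k+1))]
      conv_rhs => rw [← EReal.coe_toReal (hm_ne_top (k+1)) (hm_ne_bot (k+1))]
      rw [← EReal.coe_add, EReal.coe_lt_coe_iff]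
      have h1 : 0 < epsq k := hepos k
      linarith
    have hex0 : ∃ y, fk (k+1) y < m (k+1) + ((epsq k : ℝ) : EReal) := by
      have h2 := hmlt
      rw [hmdef] at h2
      obtain ⟨y, hy⟩ := iInf_lt_iff.mp h2
      exact ⟨y, hy⟩
    have hex : ∃ y, fk (k+1) y < m (k+1) + ((epsq k : ℝ) : EReal)
        ∧ fk (k+1) y ≤ fk (k+1) (xx k) := by
      by_cases hc1 : fk (k+1) (xx k) < m (k+1) + ((epsq k : ℝ) : EReal)
      · exact ⟨xx k, hc1, le_refl _⟩
      · obtain ⟨y, hy⟩ := hex0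
        exact ⟨y, hy, hy.le.trans (not_lt.mp hc1)⟩
    exact bpAux_spec f x₀ p c epsq k hex
  have hzero : ∀ k, fk (k+1) (xx k) = fk k (xx k) := by
    intro k
    rw [hstep k (xx k), sub_self, norm_zero, Real.zero_rpow hp0.ne', mul_zero]
    simp
  have ha_anti : ∀ k, fk (k+1) (xx (k+1)) ≤ fk k (xx k) := by
    intro k
    exact (hchoice k).2.trans (hzero k).le
  have hfa : ∀ k n, k ≤ n → fk n (xx n) ≤ fk k (xx k) := by
    intro k n hkn
    induction n with
    | zero => rw [Nat.le_zero.mp hkn]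
    | succ n ih =>
      rcases Nat.lt_or_ge k (n+1) with h | h
      · exact (ha_anti n).trans (ih (Nat.lt_succ_iff.mp h))
      · rw [le_antisymm hkn h]
  have hAbound : ∀ k, fk k (xx k) ≤ m k + ((e k : ℝ) : EReal) := by
    intro k
    cases k with
    | zero =>
      have h1 : fk 0 (xx 0) = f x₀ := rfl
      have h2 : m 0 = M := rfl
      rw [h1, h2, he0, hfx0coe, ← hMcoe, ← EReal.coe_add]
    | succ k =>
      have h3 : epsq k = e (k+1) := rfl
      have := (hchoice k).1.le
      rwa [h3] at this
  have hfk_xx_ne_top : ∀ k, fk k (xx k) ≠ ⊤ := by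
    intro k
    exact ne_top_of_lt (lt_of_le_of_lt (hAbound k)
      (EReal.add_lt_top (hm_ne_top k) (EReal.coe_ne_top _)))
  have hd : ∀ k, ‖xx (k+1) - xx k‖ ≤ r k := by
    intro k
    have h1 : m k + ((c k * ‖xx (k+1) - xx k‖ ^ p : ℝ) : EReal)
        ≤ m k + ((e k : ℝ) : EReal) := by
      calc m k + ((c k * ‖xx (k+1) - xx k‖ ^ p : ℝ) : EReal)
          ≤ fk k (xx (k+1)) + ((c k * ‖xx (k+1) - xx k‖ ^ p : ℝ) : EReal) :=
            add_le_add_left (hm_le k _) _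
        _ = fk (k+1) (xx (k+1)) := (hstep k _).symm
        _ ≤ fk (k+1) (xx k) := (hchoice k).2
        _ = fk k (xx k) := hzero k
        _ ≤ m k + ((e k : ℝ) : EReal) := hAbound k
    have h2 : c k * ‖xx (k+1) - xx k‖ ^ p ≤ e k :=
      bp_cancel_le (hm_ne_bot k) (hm_ne_top k) h1
    have h3 : e k = c k * r k ^ p := by
      have : e k = δ * w k * r k ^ p := rfl
      rw [this, hcdef, mul_assoc]
    rw [h3] at h2
    have h4 : ‖xx (k+1) - xx k‖ ^ p ≤ r k ^ p :=
      le_of_mul_le_mul_left h2 (hcpos k)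
    exact (Real.rpow_le_rpow_iff (norm_nonneg _) (hrnn k) hp0).mp h4
  have hr_sum : Summable r := by
    refine (summable_nat_add_iff 1).mp ?_
    have h1 : Summable fun n : ℕ => ρ * (1/2:ℝ) ^ (n + 1) := by
      simp_rw [pow_succ]
      exact (summable_geometric_two.mul_right _).mul_left ρ
    exact h1.congr fun n => (hrS n).symm
  have hrtail : ∀ n, ∑' j, r (j + (n+1)) = 2 * r (n+1) := by
    intro n
    have h1 : ∀ j : ℕ, r (j + (n+1)) = (ρ * (1/2:ℝ)^(n+1)) * (1/2:ℝ) ^ j := by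
      intro j
      have h2 : j + (n+1) = (j + n) + 1 := by ring
      rw [h2, hrS, pow_succ, pow_add]
      ring
    rw [tsum_congr h1, tsum_mul_left, tsum_geometric_two, hrS]
    ring
  have htsumr : ∑' k, r k = r0 + ρ := by
    rw [hr_sum.tsum_eq_zero_add, hr0']
    have h1 : ∀ b : ℕ, r (b + 1) = (ρ * (1/2)) * (1/2:ℝ) ^ b := by
      intro b; rw [hrS]; ring
    rw [tsum_congr h1, tsum_mul_left, tsum_geometric_two]
    ring
  have htsumr_le : ∑' k, r k ≤ lam := by
    rw [htsumr, hρdef]; linarith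
  have hdiststep : ∀ n, dist (xx n) (xx (n+1)) ≤ r n := by
    intro n
    rw [dist_eq_norm, norm_sub_rev]
    exact hd n
  have hcauchy : CauchySeq xx := cauchySeq_of_dist_le_of_summable r hdiststep hr_sum
  obtain ⟨v, hv⟩ := cauchySeq_tendsto_of_complete hcauchy
  have hdistxv : ∀ n, dist (xx n) v ≤ ∑' j, r (j + n) := by
    intro n
    have h1 := dist_le_tsum_of_dist_le_of_tendsto r hdiststep hr_sum hv n
    refine h1.trans_eq (tsum_congr fun j => ?_)
    rw [add_comm]
  have htail_le : ∀ n, ∑' j, r (j + n) ≤ ∑' k, r k := by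
    intro n
    have h1 := hr_sum.sum_add_tsum_nat_add n
    have h2 : 0 ≤ ∑ i ∈ Finset.range n, r i := Finset.sum_nonneg fun i _ => hrnn i
    linarith
  have hxv_lam : ∀ n, ‖xx n - v‖ ≤ lam := by
    intro n
    rw [← dist_eq_norm]
    exact (hdistxv n).trans ((htail_le n).trans htsumr_le)
  have hxvk : ∀ k, ‖xx (k+1) - v‖ ≤ 2 * r (k+1) := by
    intro k
    rw [← dist_eq_norm]
    exact (hdistxv (k+1)).trans (hrtail k).le
  have hvx0 : ‖v - x₀‖ ≤ lam := by
    have h1 : dist (xx 0) v ≤ ∑' k, r k :=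
      dist_le_tsum_of_dist_le_of_tendsto₀ r hdiststep hr_sum hv
    rw [hxx0] at h1
    rw [← dist_eq_norm, dist_comm]
    exact h1.trans htsumr_le
  have hterm_nonneg : ∀ (y : X) (i : ℕ), 0 ≤ w i * ‖y - xx i‖ ^ p :=
    fun y i => mul_nonneg (hwpos i).le (Real.rpow_nonneg (norm_nonneg _) p)
  have hSsum : ∀ y : X, Summable fun i => w i * ‖y - xx i‖ ^ p := by
    intro y
    refine Summable.of_nonneg_of_le (hterm_nonneg y) (fun i => ?_)
      (hw_sum.mul_right ((‖y - v‖ + lam) ^ p))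
    refine mul_le_mul_of_nonneg_left ?_ (hwpos i).le
    refine Real.rpow_le_rpow (norm_nonneg _) ?_ hp0.le
    calc ‖y - xx i‖ = dist y (xx i) := (dist_eq_norm _ _).symm
      _ ≤ dist y v + dist v (xx i) := dist_triangle _ _ _
      _ ≤ ‖y - v‖ + lam := by
          rw [dist_eq_norm, dist_comm, dist_eq_norm]
          exact add_le_add_right (hxv_lam i) _
  set S : X → ℝ := fun y => ∑' i, w i * ‖y - xx i‖ ^ p with hSdef
  set g : X → EReal := fun y => f y + ((δ * S y : ℝ) : EReal) with hgdef
  have hpartial_le : ∀ (k : ℕ) (y : X),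
      (∑ i ∈ Finset.range k, c i * ‖y - xx i‖ ^ p) ≤ δ * S y := by
    intro k y
    have h1 : ∀ i, c i * ‖y - xx i‖ ^ p = δ * (w i * ‖y - xx i‖ ^ p) := by
      intro i
      have : c i = δ * w i := rfl
      rw [this]; ring
    calc (∑ i ∈ Finset.range k, c i * ‖y - xx i‖ ^ p)
        = δ * ∑ i ∈ Finset.range k, w i * ‖y - xx i‖ ^ p := by
          rw [Finset.mul_sum]; exact Finset.sum_congr rfl fun i _ => h1 i
      _ ≤ δ * S y := by
          refine mul_le_mul_of_nonneg_left ?_ hδ.le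
          exact (hSsum y).sum_le_tsum _ (fun i _ => hterm_nonneg y i)
  have hfk_le_g : ∀ k y, fk k y ≤ g y := by
    intro k y
    rw [hclosed k y]
    exact add_le_add_right (EReal.coe_le_coe_iff.mpr (hpartial_le k y)) _
  set mstar : EReal := ⨅ y, g y with hmstardef
  have hm_le_mstar : ∀ k, m k ≤ mstar :=
    fun k => le_iInf fun y => (hm_le k y).trans (hfk_le_g k y)
  have hmstar_ne_bot : mstar ≠ ⊥ := by
    intro h
    exact hm_ne_bot 0 (le_bot_iff.mp (h ▸ hm_le_mstar 0))
  have hg_ne_top : ∀ y, f y ≠ ⊤ → g y ≠ ⊤ := by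
    intro y hy
    exact (EReal.add_lt_top hy (EReal.coe_ne_top _)).ne
  have hmstar_ne_top : mstar ≠ ⊤ := by
    intro h
    exact hg_ne_top x₀ hfx0_ne_top (top_le_iff.mp (h ▸ iInf_le _ x₀))
  set ms : ℝ := mstar.toReal with hmsdef
  have hmscoe : (ms : EReal) = mstar := EReal.coe_toReal hmstar_ne_top hmstar_ne_bot
  set A : ℕ → ℝ := fun k => (fk k (xx k)).toReal with hAdef
  have hAcoe : ∀ k, ((A k : ℝ) : EReal) = fk k (xx k) :=
    fun k => EReal.coe_toReal (hfk_xx_ne_top k) (hfk_ne_bot k (xx k))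
  set Mrk : ℕ → ℝ := fun k => (m k).toReal with hMrkdef
  have hMrkcoe : ∀ k, ((Mrk k : ℝ) : EReal) = m k :=
    fun k => EReal.coe_toReal (hm_ne_top k) (hm_ne_bot k)
  have hA_anti : ∀ k n, k ≤ n → A n ≤ A k := by
    intro k n hkn
    exact EReal.toReal_le_toReal (hfa k n hkn) (hfk_ne_bot n _) (hfk_xx_ne_top k)
  have hA_le : ∀ k, A k ≤ Mrk k + e k := by
    intro k
    have h1 := hAbound k
    rw [← hAcoe k, ← hMrkcoe k, ← EReal.coe_add, EReal.coe_le_coe_iff] at h1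
    exact h1
  have hMrk_le_ms : ∀ k, Mrk k ≤ ms := by
    intro k
    have h1 := hm_le_mstar k
    rw [← hMrkcoe k, ← hmscoe, EReal.coe_le_coe_iff] at h1
    exact h1
  set τ : ℕ → ℝ := fun n => ∑' i, w (i + n) * ‖xx n - xx (i + n)‖ ^ p with hτdef
  have hτsummable : ∀ n, Summable fun i => w (i + n) * ‖xx n - xx (i + n)‖ ^ p := by
    intro n
    exact (summable_nat_add_iff (f := fun i => w i * ‖xx n - xx i‖ ^ p) n).mpr (hSsum (xx n))
  have hg_xx : ∀ n, g (xx n) = fk n (xx n) + ((δ * τ n : ℝ) : EReal) := by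
    intro n
    have h1 : S (xx n) = (∑ i ∈ Finset.range n, w i * ‖xx n - xx i‖ ^ p) + τ n :=
      ((hSsum (xx n)).sum_add_tsum_nat_add n).symm
    have h2 : δ * S (xx n)
        = (∑ i ∈ Finset.range n, c i * ‖xx n - xx i‖ ^ p) + δ * τ n := by
      rw [h1, mul_add, Finset.mul_sum]
      congr 1
      refine Finset.sum_congr rfl fun i _ => ?_
      have h3 : c i = δ * w i := rfl
      rw [h3]; ring
    have h4 : g (xx n) = f (xx n) + ((δ * S (xx n) : ℝ) : EReal) := rfl
    rw [h4, h2, EReal.coe_add, ← add_assoc, ← hclosed n (xx n)]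
  have hτ_le : ∀ n, τ n ≤ (2 * (2 * lam) ^ p) * (1/2:ℝ) ^ n := by
    intro n
    have h1 : ∀ i, w (i + n) * ‖xx n - xx (i + n)‖ ^ p
        ≤ ((2*lam) ^ p * (1/2:ℝ)^n) * (1/2:ℝ) ^ i := by
      intro i
      have hn1 : ‖xx n - xx (i+n)‖ ≤ 2 * lam := by
        calc ‖xx n - xx (i+n)‖ = dist (xx n) (xx (i+n)) := (dist_eq_norm _ _).symm
          _ ≤ dist (xx n) v + dist v (xx (i+n)) := dist_triangle _ _ _
          _ ≤ lam + lam := by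
              refine add_le_add ?_ ?_
              · rw [dist_eq_norm]; exact hxv_lam n
              · rw [dist_comm, dist_eq_norm]; exact hxv_lam (i+n)
          _ = 2 * lam := by ring
      have hn2 : ‖xx n - xx (i+n)‖ ^ p ≤ (2*lam) ^ p :=
        Real.rpow_le_rpow (norm_nonneg _) hn1 hp0.le
      have hn3 : w (i+n) ≤ (1/2:ℝ)^n * (1/2:ℝ)^i := by
        have h4 := hwle (i+n)
        rw [pow_add] at h4
        calc w (i+n) ≤ (1/2:ℝ)^i * (1/2:ℝ)^n := h4
          _ = (1/2:ℝ)^n * (1/2:ℝ)^i := by ring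
      calc w (i + n) * ‖xx n - xx (i + n)‖ ^ p
          ≤ ((1/2:ℝ)^n * (1/2:ℝ)^i) * ((2*lam) ^ p) := by
            refine mul_le_mul hn3 hn2 (Real.rpow_nonneg (norm_nonneg _) p) (by positivity)
        _ = ((2*lam) ^ p * (1/2:ℝ)^n) * (1/2:ℝ) ^ i := by ring
    have h2 : τ n ≤ ∑' i, ((2*lam) ^ p * (1/2:ℝ)^n) * (1/2:ℝ) ^ i :=
      (hτsummable n).tsum_le_tsum h1 (summable_geometric_two.mul_left _)
    rw [tsum_mul_left, tsum_geometric_two] at h2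
    calc τ n ≤ (2*lam) ^ p * (1/2:ℝ)^n * 2 := h2
      _ = (2 * (2 * lam) ^ p) * (1/2:ℝ) ^ n := by ring
  have hτnn : ∀ n, 0 ≤ τ n := fun n => tsum_nonneg fun i => hterm_nonneg (xx n) (i + n)
  have hgeo0 : Tendsto (fun n : ℕ => (1/2:ℝ) ^ n) atTop (nhds 0) :=
    tendsto_pow_atTop_nhds_zero_of_lt_one (by norm_num) (by norm_num)
  have hms_le_A : ∀ k, ms ≤ A k := by
    intro k
    have h1 : ∀ n, ms ≤ A n + δ * τ n := by
      intro n
      have h2 : mstar ≤ g (xx n) := iInf_le _ (xx n)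
      rw [hg_xx n, ← hAcoe n, ← EReal.coe_add, ← hmscoe, EReal.coe_le_coe_iff] at h2
      exact h2
    have h3 : ∀ᶠ n in atTop, ms ≤ A k + δ * ((2 * (2 * lam) ^ p) * (1/2:ℝ) ^ n) := by
      filter_upwards [eventually_ge_atTop k] with n hn
      calc ms ≤ A n + δ * τ n := h1 n
        _ ≤ A k + δ * ((2 * (2 * lam) ^ p) * (1/2:ℝ) ^ n) :=
            add_le_add (hA_anti k n hn) (mul_le_mul_of_nonneg_left (hτ_le n) hδ.le)
    have h4 : Tendsto (fun n : ℕ => A k + δ * ((2 * (2 * lam) ^ p) * (1/2:ℝ) ^ n))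
        atTop (nhds (A k)) := by
      have h5 := ((hgeo0.const_mul (2 * (2 * lam) ^ p)).const_mul δ).const_add (A k)
      simpa using h5
    exact ge_of_tendsto h4 h3
  have hlsc_fk : ∀ k, LowerSemicontinuous (fk k) := by
    intro k
    have hφ : Continuous fun y : X => (∑ i ∈ Finset.range k, c i * ‖y - xx i‖ ^ p : ℝ) := by
      refine continuous_finset_sum _ fun i _ => ?_
      have h1 : Continuous fun y : X => ‖y - xx i‖ :=
        (continuous_id.sub continuous_const).norm
      exact continuous_const.mul (h1.rpow_const fun y => Or.inr hp0.le)
    have h2 : LowerSemicontinuous fun y : X =>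
        f y + (((∑ i ∈ Finset.range k, c i * ‖y - xx i‖ ^ p : ℝ)) : EReal) := by
      refine LowerSemicontinuous.add' hlsc
        ((continuous_coe_real_ereal.comp hφ).lowerSemicontinuous) fun y => ?_
      exact EReal.continuousAt_add (Or.inr (EReal.coe_ne_bot _)) (Or.inr (EReal.coe_ne_top _))
    have h3 : (fun y : X => f y
        + (((∑ i ∈ Finset.range k, c i * ‖y - xx i‖ ^ p : ℝ)) : EReal)) = fk k := by
      funext y
      exact (hclosed k y).symm
    rw [← h3]
    exact h2
  have he_tend : Tendsto e atTop (nhds 0) := by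
    have hbound : ∀ᶠ n in atTop, e n ≤ (δ * ρ ^ p) * (1/2:ℝ) ^ n := by
      filter_upwards [eventually_ge_atTop 1] with n hn
      obtain ⟨k, rfl⟩ := Nat.exists_eq_add_of_le hn
      have h1 : e (1 + k) = δ * w (1 + k) * r (1 + k) ^ p := rfl
      have h2 : r (1 + k) ≤ ρ := by
        rw [add_comm, hrS]
        calc ρ * (1/2:ℝ)^(k+1) ≤ ρ * 1 := by
              refine mul_le_mul_of_nonneg_left ?_ hρpos.le
              refine pow_le_one₀ (by norm_num) (by norm_num)
          _ = ρ := mul_one ρ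
      have h3 : r (1 + k) ^ p ≤ ρ ^ p :=
        Real.rpow_le_rpow (hrnn _) h2 hp0.le
      have h4 : w (1 + k) ≤ (1/2:ℝ)^(1+k) := hwle (1+k)
      calc e (1 + k) = δ * w (1 + k) * r (1 + k) ^ p := h1
        _ ≤ δ * (1/2:ℝ)^(1+k) * ρ ^ p := by
            refine mul_le_mul ?_ h3 (Real.rpow_nonneg (hrnn _) p) (by positivity)
            exact mul_le_mul_of_nonneg_left h4 hδ.le
        _ = (δ * ρ ^ p) * (1/2:ℝ) ^ (1+k) := by ring
    refine squeeze_zero' (Eventually.of_forall henn) hbound ?_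
    have h5 := hgeo0.const_mul (δ * ρ ^ p)
    simpa using h5
  have hfk_mono : ∀ k n, k ≤ n → ∀ y, fk k y ≤ fk n y := by
    intro k n hkn y
    rw [hclosed k y, hclosed n y]
    refine add_le_add_right (EReal.coe_le_coe_iff.mpr ?_) _
    refine Finset.sum_le_sum_of_subset_of_nonneg
      (Finset.range_subset_range.mpr hkn) (fun i _ _ => ?_)
    exact mul_nonneg (hcpos i).le (Real.rpow_nonneg (norm_nonneg _) p)
  have hfkv_le : ∀ k, fk k v ≤ mstar := by
    intro k
    refine bp_le_of_forall_lt fun b hb => ?_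
    have hev1 : ∀ᶠ n in atTop, b < fk k (xx n) := hv.eventually (hlsc_fk k v b hb)
    have hev2 : ∀ᶠ n in atTop, fk k (xx n) ≤ ((ms + e n : ℝ) : EReal) := by
      filter_upwards [eventually_ge_atTop k] with n hn
      calc fk k (xx n) ≤ fk n (xx n) := hfk_mono k n hn (xx n)
        _ = ((A n : ℝ) : EReal) := (hAcoe n).symm
        _ ≤ ((ms + e n : ℝ) : EReal) := by
            rw [EReal.coe_le_coe_iff]
            have := hA_le n
            have := hMrk_le_ms n
            linarith
    have hev : ∀ᶠ n in atTop, b < ((ms + e n : ℝ) : EReal) := by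
      filter_upwards [hev1, hev2] with n h1 h2 using lt_of_lt_of_le h1 h2
    by_cases hbbot : b = ⊥
    · rw [hbbot]; exact bot_le
    · have hbtop : b ≠ ⊤ := by
        obtain ⟨n, hn⟩ := hev.exists
        exact ne_top_of_lt hn
      lift b to ℝ using ⟨hbtop, hbbot⟩
      rw [← hmscoe, EReal.coe_le_coe_iff]
      have hev' : ∀ᶠ n in atTop, b ≤ ms + e n := by
        filter_upwards [hev] with n hn
        exact (EReal.coe_lt_coe_iff.mp hn).le
      have htendms : Tendsto (fun n => ms + e n) atTop (nhds ms) := by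
        have h6 := he_tend.const_add ms
        simpa using h6
      exact ge_of_tendsto htendms hev'
  have hfv_ne_top : f v ≠ ⊤ := by
    intro h
    have h1 := hfkv_le 0
    rw [hfk0, h] at h1
    exact hmstar_ne_top (top_le_iff.mp h1)
  have hfv_ne_bot : f v ≠ ⊥ := hbot v
  have hgv_le : g v ≤ mstar := by
    set fv : ℝ := (f v).toReal with hfvdef
    have hfvcoe : ((fv : ℝ) : EReal) = f v := EReal.coe_toReal hfv_ne_top hfv_ne_bot
    have h1 : ∀ k, fv + (∑ i ∈ Finset.range k, c i * ‖v - xx i‖ ^ p) ≤ ms := by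
      intro k
      have h2 := hfkv_le k
      rw [hclosed k v, ← hfvcoe, ← EReal.coe_add, ← hmscoe, EReal.coe_le_coe_iff] at h2
      exact h2
    have hsum2 : Summable fun i => c i * ‖v - xx i‖ ^ p := by
      have h3 : ∀ i, c i * ‖v - xx i‖ ^ p = δ * (w i * ‖v - xx i‖ ^ p) := by
        intro i
        have h4 : c i = δ * w i := rfl
        rw [h4]; ring
      exact ((hSsum v).mul_left δ).congr fun i => (h3 i).symm
    have htend : Tendsto (fun k => fv + ∑ i ∈ Finset.range k, c i * ‖v - xx i‖ ^ p)
        atTop (nhds (fv + δ * S v)) := by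
      have h5 : (∑' i, c i * ‖v - xx i‖ ^ p) = δ * S v := by
        have h3 : ∀ i, c i * ‖v - xx i‖ ^ p = δ * (w i * ‖v - xx i‖ ^ p) := by
          intro i
          have h4 : c i = δ * w i := rfl
          rw [h4]; ring
        rw [tsum_congr h3, tsum_mul_left]
      have h6 := hsum2.hasSum.tendsto_sum_nat
      rw [h5] at h6
      exact h6.const_add fv
    have h7 : fv + δ * S v ≤ ms := le_of_tendsto htend (Eventually.of_forall h1)
    have h8 : g v = ((fv + δ * S v : ℝ) : EReal) := by
      have h9 : g v = f v + ((δ * S v : ℝ) : EReal) := rfl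
      rw [h9, ← hfvcoe, ← EReal.coe_add]
    rw [h8, ← hmscoe, EReal.coe_le_coe_iff]
    exact h7
  refine ⟨v, xx, w, hvx0, hv, fun i => (hwpos i).le, hw_tsum, ?_, ?_, ?_⟩
  · -- value inequality at v
    show g v ≤ f x₀
    calc g v ≤ mstar := hgv_le
      _ ≤ ((A 0 : ℝ) : EReal) := by
          rw [← hmscoe]; exact EReal.coe_le_coe_iff.mpr (hms_le_A 0)
      _ = fk 0 (xx 0) := hAcoe 0
      _ = f x₀ := by rw [hfk0, hxx0]
  · -- global minimality
    intro y
    show g v ≤ g y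
    exact hgv_le.trans (iInf_le _ y)
  · -- strong minimality
    intro yseq hty
    have hty' : Tendsto (fun n => g (yseq n)) atTop (nhds (g v)) := hty
    have hgveq : g v = mstar := le_antisymm hgv_le (iInf_le _ v)
    rw [hgveq] at hty'
    rw [Metric.tendsto_atTop]
    intro ε' hε'
    have hrt : Tendsto (fun k : ℕ => ρ * (1/2:ℝ)^(k+1)) atTop (nhds 0) := by
      have h0 := hgeo0.const_mul (ρ * (1/2))
      have h1 : Tendsto (fun k : ℕ => (ρ * (1/2)) * (1/2:ℝ)^k) atTop (nhds 0) := by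
        simpa using h0
      refine h1.congr fun k => ?_
      rw [pow_succ]; ring
    have hrtend : Tendsto (fun k : ℕ => r (k+1)) atTop (nhds 0) :=
      hrt.congr fun k => (hrS k).symm
    obtain ⟨k, hk⟩ := (hrtend.eventually_lt_const (show (0:ℝ) < ε'/5 by linarith)).exists
    have hη : 0 < e (k+1) := hepos k
    have hevent : ∀ᶠ n in atTop, g (yseq n) < mstar + ((e (k+1) : ℝ) : EReal) := by
      refine hty'.eventually_lt_const ?_
      conv_lhs => rw [← hmscoe]
      rw [← hmscoe, ← EReal.coe_add, EReal.coe_lt_coe_iff]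
      linarith
    obtain ⟨N, hN⟩ := eventually_atTop.mp hevent
    refine ⟨N, fun n hn => ?_⟩
    have h1 := hN n hn
    have h2 : m (k+1) + ((c (k+1) * ‖yseq n - xx (k+1)‖ ^ p : ℝ) : EReal)
        < m (k+1) + ((e (k+1) + e (k+1) : ℝ) : EReal) := by
      calc m (k+1) + ((c (k+1) * ‖yseq n - xx (k+1)‖ ^ p : ℝ) : EReal)
          ≤ fk (k+1) (yseq n) + ((c (k+1) * ‖yseq n - xx (k+1)‖ ^ p : ℝ) : EReal) :=
            add_le_add_left (hm_le (k+1) _) _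
        _ = fk (k+2) (yseq n) := (hstep (k+1) _).symm
        _ ≤ g (yseq n) := hfk_le_g (k+2) _
        _ < mstar + ((e (k+1) : ℝ) : EReal) := h1
        _ ≤ m (k+1) + ((e (k+1) + e (k+1) : ℝ) : EReal) := by
            rw [← hmscoe, ← hMrkcoe (k+1), ← EReal.coe_add, ← EReal.coe_add,
              EReal.coe_le_coe_iff]
            have h3 := hms_le_A (k+1)
            have h4 := hA_le (k+1)
            linarith
    have h3 : c (k+1) * ‖yseq n - xx (k+1)‖ ^ p < e (k+1) + e (k+1) :=
      bp_cancel_lt (hm_ne_bot (k+1)) (hm_ne_top (k+1)) h2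
    have h5 : e (k+1) = c (k+1) * r (k+1) ^ p := rfl
    have h4 : e (k+1) + e (k+1) ≤ c (k+1) * (2 * r (k+1)) ^ p := by
      have h6 : (2 * r (k+1)) ^ p = 2 ^ p * r (k+1) ^ p :=
        Real.mul_rpow (by norm_num) (hrnn (k+1))
      have h7 : (2:ℝ) ≤ 2 ^ p := by
        have h8 : (2:ℝ) ^ (1:ℝ) ≤ 2 ^ p :=
          (Real.rpow_le_rpow_left_iff one_lt_two).mpr hp
        rwa [Real.rpow_one] at h8
      have h9 : 0 ≤ r (k+1) ^ p := Real.rpow_nonneg (hrnn _) p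
      have h10 : 0 < c (k+1) := hcpos (k+1)
      rw [h5, h6]
      nlinarith
    have h11 : ‖yseq n - xx (k+1)‖ ^ p < (2 * r (k+1)) ^ p :=
      lt_of_mul_lt_mul_left (h3.trans_le h4) (hcpos (k+1)).le
    have h12 : ‖yseq n - xx (k+1)‖ < 2 * r (k+1) :=
      (Real.rpow_lt_rpow_iff (norm_nonneg _)
        (by have := hrSpos k; linarith) hp0).mp h11
    have h13 : dist (yseq n) v < ε' := by
      calc dist (yseq n) v ≤ dist (yseq n) (xx (k+1)) + dist (xx (k+1)) v :=
            dist_triangle _ _ _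
        _ < 2 * r (k+1) + 2 * r (k+1) := by
            refine add_lt_add_of_lt_of_le ?_ ?_
            · rw [dist_eq_norm]; exact h12
            · rw [dist_eq_norm]; exact hxvk k
        _ < ε' := by
            have := hrSpos k
            linarith
    exact h13
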